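/- Let x = x_k + x_{k+1} + ⋯ + x_n with x_i ∈ A_i for each i (that is, all homogeneous components of x of degree less than k vanish). If k > 1, then x is unsolvable. (Lemma 4.1) -/

import Mathlib

open scoped BigOperators

/-- Defining relation of the Weyl algebra: `p * q = q * p + 1`. -/
inductive WeylRel (F : Type*) [CommRing F] :
    FreeAlgebra F (Fin 2) → FreeAlgebra F (Fin 2) → Prop
  | comm : WeylRel F (FreeAlgebra.ι F 0 * FreeAlgebra.ι F 1)
      (FreeAlgebra.ι F 1 * FreeAlgebra.ι F 0 + 1)

/-- The Weyl algebra over `F`. -/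
abbrev WeylAlgebra (F : Type*) [CommRing F] := RingQuot (WeylRel F)

variable (F : Type*) [Field F] [CharZero F]

/-- The generator `p` of the Weyl algebra. -/
noncomputable def Wp : WeylAlgebra F :=
  RingQuot.mkAlgHom F (WeylRel F) (FreeAlgebra.ι F 0)

/-- The generator `q` of the Weyl algebra. -/
noncomputable def Wq : WeylAlgebra F :=
  RingQuot.mkAlgHom F (WeylRel F) (FreeAlgebra.ι F 1)

/-- `x` is solvable if `[x, y] = 1` for some `y`. -/
def Solvable (x : WeylAlgebra F) : Prop := ∃ y : WeylAlgebra F, x * y - y * x = 1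

/-- The centralizer `C(x)`. -/
def Cset (x : WeylAlgebra F) : Set (WeylAlgebra F) := {y | x * y - y * x = 0}

/-- `N(x) = {y | (ad x)^n y = 0 for some n ≥ 1}`. -/
def Nset (x : WeylAlgebra F) : Set (WeylAlgebra F) :=
  {y | ∃ n : ℕ, 1 ≤ n ∧ (fun z => x * z - z * x)^[n] y = 0}

/-- `D(x) = {y | [x,y] = λ y for some scalar λ}`. -/
def Dset (x : WeylAlgebra F) : Set (WeylAlgebra F) :=
  {y | ∃ c : F, x * y - y * x = c • y}

def Delta1 : Set (WeylAlgebra F) :=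
  {x | x ∉ Set.range (algebraMap F (WeylAlgebra F)) ∧
    Nset F x = Set.univ ∧ Dset F x = Cset F x}

def Delta2 : Set (WeylAlgebra F) :=
  {x | x ∉ Set.range (algebraMap F (WeylAlgebra F)) ∧
    Nset F x ≠ Set.univ ∧ Nset F x ≠ Cset F x ∧ Dset F x = Cset F x}

/-- The graded component `A_s = {a | [pq, a] = s • a}`. -/
def Wgrade (s : ℤ) : Set (WeylAlgebra F) :=
  {a | (Wp F * Wq F) * a - a * (Wp F * Wq F) = s • a}

/-- The monomial `p^i q^j`. -/
noncomputable def Wmono (i j : ℕ) : WeylAlgebra F := Wp F ^ i * Wq F ^ j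

/-- `α` is the coordinate family of `x` in the basis `p^i q^j`. -/
def Represents (α : (ℕ × ℕ) →₀ F) (x : WeylAlgebra F) : Prop :=
  x = α.sum fun ij c => c • Wmono F ij.1 ij.2

/-- `v_{ρ,σ}(x) = max { iρ + jσ | (i,j) ∈ E(x) }`. -/
def vdeg (α : (ℕ × ℕ) →₀ F) (ρ σ : ℕ) : ℕ :=
  α.support.sup fun ij => ij.1 * ρ + ij.2 * σ

/-- `E_{ρ,σ}(x)`. -/
def Eset (α : (ℕ × ℕ) →₀ F) (ρ σ : ℕ) : Finset (ℕ × ℕ) :=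
  α.support.filter fun ij => ij.1 * ρ + ij.2 * σ = vdeg F α ρ σ

/-- The `(ρ,σ)`-polynomial of `x`, an element of `F[X,Y]`. -/
noncomputable def wpoly (α : (ℕ × ℕ) →₀ F) (ρ σ : ℕ) : MvPolynomial (Fin 2) F :=
  ∑ ij ∈ Eset F α ρ σ,
    MvPolynomial.monomial (Finsupp.single 0 ij.1 + Finsupp.single 1 ij.2) (α ij)

/-- The `(ρ,σ)`-term of `x`, an element of the Weyl algebra. -/
noncomputable def wterm (α : (ℕ × ℕ) →₀ F) (ρ σ : ℕ) : WeylAlgebra F :=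
  ∑ ij ∈ Eset F α ρ σ, α ij • Wmono F ij.1 ij.2

-- === auxiliary development for Lemma 4.1 ===
set_option linter.unusedSectionVars false

open Polynomial

noncomputable def WDop : Module.End F (Polynomial F) := Polynomial.derivative

noncomputable def WXop : Module.End F (Polynomial F) := LinearMap.mulLeft F Polynomial.X

lemma WDX_rel : WDop F * WXop F = WXop F * WDop F + 1 := by
  apply LinearMap.ext; intro v
  simp only [Module.End.mul_apply, LinearMap.add_apply, Module.End.one_apply, WDop, WXop,
    LinearMap.mulLeft_apply]
  rw [Polynomial.derivative_mul, Polynomial.derivative_X, one_mul]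
  ring

noncomputable def Wrho : WeylAlgebra F →ₐ[F] Module.End F (Polynomial F) :=
  RingQuot.liftAlgHom F ⟨FreeAlgebra.lift F ![WDop F, WXop F], by
    rintro a b ⟨⟩
    simp only [map_mul, map_add, map_one, FreeAlgebra.lift_ι_apply,
      Matrix.cons_val_zero, Matrix.cons_val_one, Matrix.head_cons]
    exact WDX_rel F⟩

lemma Wrho_p : Wrho F (Wp F) = WDop F := by
  rw [Wp, Wrho, RingQuot.liftAlgHom_mkAlgHom_apply, FreeAlgebra.lift_ι_apply]
  simp

lemma Wrho_q : Wrho F (Wq F) = WXop F := by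
  rw [Wq, Wrho, RingQuot.liftAlgHom_mkAlgHom_apply, FreeAlgebra.lift_ι_apply]
  simp

-- banded operators
variable {F} in
def WIsBanded (Y : Module.End F (Polynomial F)) (N : ℕ) (g : ℤ → Polynomial F) : Prop :=
  (∀ t : ℤ, g t ≠ 0 → t ∈ Finset.Icc (-(N:ℤ)) (N:ℤ)) ∧
  (∀ t z : ℤ, 0 ≤ z → z + t < 0 → (g t).eval ((z : F)) = 0) ∧
  (∀ m r : ℕ, (Y ((Polynomial.X : Polynomial F) ^ m)).coeff r = (g ((r:ℤ) - (m:ℤ))).eval ((m : F)))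

variable {F} in
def WBanded (Y : Module.End F (Polynomial F)) : Prop := ∃ N g, WIsBanded Y N g

variable {F} in
lemma w_apply_eq_sum (Y : Module.End F (Polynomial F)) (v : Polynomial F) :
    Y v = ∑ j ∈ Finset.range (v.natDegree + 1), v.coeff j • Y (Polynomial.X ^ j) := by
  conv_lhs => rw [Polynomial.as_sum_range' v (v.natDegree + 1) (Nat.lt_succ_self _)]
  rw [map_sum]
  refine Finset.sum_congr rfl (fun j _ => ?_)
  rw [← Polynomial.smul_X_eq_monomial, map_smul]

variable {F} in
lemma w_apply_coeff (Y : Module.End F (Polynomial F)) (v : Polynomial F) (r : ℕ) :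
    (Y v).coeff r
      = ∑ j ∈ Finset.range (v.natDegree + 1), v.coeff j * (Y (Polynomial.X ^ j)).coeff r := by
  rw [w_apply_eq_sum Y v, Polynomial.finset_sum_coeff]
  exact Finset.sum_congr rfl (fun j _ => by rw [Polynomial.coeff_smul, smul_eq_mul])

lemma wbanded_one : WBanded (1 : Module.End F (Polynomial F)) := by
  classical
  refine ⟨0, fun t => if t = 0 then 1 else 0, ?_, ?_, ?_⟩
  · intro t ht
    by_cases h : t = 0
    · subst h; simp
    · simp [h] at ht
  · intro t z hz hzt
    by_cases h : t = 0
    · omega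
    · simp [h]
  · intro m r
    rw [Module.End.one_apply, Polynomial.coeff_X_pow]
    by_cases h : (r:ℤ) - m = 0
    · have : r = m := by omega
      simp [this, h]
    · have : ¬ (r = m) := by omega
      simp [this, h]

lemma wbanded_smul (c : F) {Y : Module.End F (Polynomial F)} (hY : WBanded Y) :
    WBanded (c • Y) := by
  obtain ⟨N, g, hs, hv, hc⟩ := hY
  refine ⟨N, fun t => Polynomial.C c * g t, ?_, ?_, ?_⟩
  · intro t ht
    dsimp only at ht
    exact hs t (fun h => ht (by rw [h, mul_zero]))
  · intro t z hz hzt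
    rw [Polynomial.eval_mul, Polynomial.eval_C, hv t z hz hzt, mul_zero]
  · intro m r
    rw [LinearMap.smul_apply, Polynomial.coeff_smul, smul_eq_mul, hc,
      Polynomial.eval_mul, Polynomial.eval_C]

lemma wbanded_add {Y Z : Module.End F (Polynomial F)} (hY : WBanded Y) (hZ : WBanded Z) :
    WBanded (Y + Z) := by
  obtain ⟨N₁, g₁, hs₁, hv₁, hc₁⟩ := hY
  obtain ⟨N₂, g₂, hs₂, hv₂, hc₂⟩ := hZ
  refine ⟨max N₁ N₂, fun t => g₁ t + g₂ t, ?_, ?_, ?_⟩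
  · intro t ht
    dsimp only at ht
    have : g₁ t ≠ 0 ∨ g₂ t ≠ 0 := by
      by_contra h
      push_neg at h
      rw [h.1, h.2, add_zero] at ht
      exact ht rfl
    rcases this with h | h
    · have := hs₁ t h; simp only [Finset.mem_Icc] at *; omega
    · have := hs₂ t h; simp only [Finset.mem_Icc] at *; omega
  · intro t z hz hzt
    rw [Polynomial.eval_add, hv₁ t z hz hzt, hv₂ t z hz hzt, add_zero]
  · intro m r
    rw [LinearMap.add_apply, Polynomial.coeff_add, hc₁, hc₂, Polynomial.eval_add]

lemma wbanded_X : WBanded (WXop F) := by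
  classical
  refine ⟨1, fun t => if t = 1 then 1 else 0, ?_, ?_, ?_⟩
  · intro t ht
    by_cases h : t = 1
    · subst h; simp
    · simp [h] at ht
  · intro t z hz hzt
    by_cases h : t = 1
    · omega
    · simp [h]
  · intro m r
    rw [WXop, LinearMap.mulLeft_apply, ← pow_succ']
    rw [Polynomial.coeff_X_pow]
    by_cases h : (r:ℤ) - m = 1
    · have : r = m + 1 := by omega
      simp [this, h]
    · have : ¬ (r = m + 1) := by omega
      simp [this, h]

lemma wbanded_D : WBanded (WDop F) := by
  classical
  refine ⟨1, fun t => if t = -1 then Polynomial.X else 0, ?_, ?_, ?_⟩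
  · intro t ht
    by_cases h : t = -1
    · subst h; simp
    · simp [h] at ht
  · intro t z hz hzt
    by_cases h : t = -1
    · subst h
      have : z = 0 := by omega
      subst this
      simp
    · simp [h]
  · intro m r
    rw [WDop]
    show (Polynomial.derivative ((Polynomial.X : Polynomial F) ^ m)).coeff r = _
    rw [Polynomial.derivative_X_pow, Polynomial.coeff_C_mul, Polynomial.coeff_X_pow]
    by_cases h : (r:ℤ) - m = -1
    · have hm : m = r + 1 := by omega
      subst hm
      simp [h]
    · have : ¬ (r = m - 1 ∧ 1 ≤ m) := by omega
      by_cases h2 : r = m - 1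
      · have hm : m = 0 := by omega
        subst hm
        simp [h]
      · simp [h2, h]

variable {F} in
lemma w_isBanded_mul {Y Z : Module.End F (Polynomial F)} {N₁ N₂ : ℕ}
    {g₁ g₂ : ℤ → Polynomial F}
    (hY : WIsBanded Y N₁ g₁) (hZ : WIsBanded Z N₂ g₂) :
    WIsBanded (Y * Z) (N₁ + N₂)
      (fun u => ∑ t ∈ Finset.Icc (-(N₂:ℤ)) (N₂:ℤ),
        g₂ t * (Polynomial.taylor ((t : ℤ) : F)) (g₁ (u - t))) := by
  classical
  obtain ⟨hs₁, hv₁, hc₁⟩ := hY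
  obtain ⟨hs₂, hv₂, hc₂⟩ := hZ
  refine ⟨?_, ?_, ?_⟩
  · -- support
    intro u hu
    dsimp only at hu
    obtain ⟨t, ht, hne⟩ := Finset.exists_ne_zero_of_sum_ne_zero hu
    have h2 : g₂ t ≠ 0 := by
      intro h; rw [h, zero_mul] at hne; exact hne rfl
    have h1 : g₁ (u - t) ≠ 0 := by
      intro h; rw [h, map_zero, mul_zero] at hne; exact hne rfl
    have m2 := hs₂ t h2
    have m1 := hs₁ (u - t) h1
    simp only [Finset.mem_Icc] at *
    push_cast
    omega
  · -- vanishing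
    intro t z hz hzt
    dsimp only
    rw [Polynomial.eval_finset_sum]
    refine Finset.sum_eq_zero (fun s hs => ?_)
    rw [Polynomial.eval_mul]
    by_cases h : z + s < 0
    · rw [hv₂ s z hz h, zero_mul]
    · push_neg at h
      rw [Polynomial.taylor_eval]
      have : ((z:F) + (s:F)) = (((z + s : ℤ)) : F) := by push_cast; ring
      rw [this, hv₁ (t - s) (z + s) h (by omega), mul_zero]
  · -- coefficient formula
    intro m r
    rw [Module.End.mul_apply, w_apply_coeff]
    have step1 : ∀ j ∈ Finset.range ((Z ((Polynomial.X : Polynomial F) ^ m)).natDegree + 1),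
        (Z ((Polynomial.X : Polynomial F) ^ m)).coeff j * (Y ((Polynomial.X : Polynomial F) ^ j)).coeff r
        = (g₂ ((j:ℤ) - (m:ℤ))).eval ((m:F)) * (g₁ ((r:ℤ) - (j:ℤ))).eval ((j:F)) := by
      intro j _
      rw [hc₂, hc₁]
    rw [Finset.sum_congr rfl step1]
    have step2 : (Polynomial.eval ((m:F))
        ((fun u => ∑ t ∈ Finset.Icc (-(N₂:ℤ)) (N₂:ℤ),
          g₂ t * (Polynomial.taylor ((t : ℤ) : F)) (g₁ (u - t))) ((r:ℤ) - (m:ℤ))))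
        = ∑ t ∈ Finset.Icc (-(N₂:ℤ)) (N₂:ℤ),
            (g₂ t).eval ((m:F)) * (g₁ ((r:ℤ) - (m:ℤ) - t)).eval ((m:F) + (t:F)) := by
      dsimp only
      rw [Polynomial.eval_finset_sum]
      refine Finset.sum_congr rfl (fun t _ => ?_)
      rw [Polynomial.eval_mul, Polynomial.taylor_eval]
    rw [step2]
    refine Finset.sum_bij_ne_zero (fun j _ _ => (j : ℤ) - (m : ℤ)) ?_ ?_ ?_ ?_
    · -- maps to
      intro j hj hne
      have h2 : g₂ ((j:ℤ) - (m:ℤ)) ≠ 0 := by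
        intro h
        rw [h, Polynomial.eval_zero, zero_mul] at hne
        exact hne rfl
      exact hs₂ _ h2
    · intro a₁ h₁ h₂ a₂ h₃ h₄ h
      omega
    · -- surjective
      intro t ht hne
      have h2 : (g₂ t).eval ((m:F)) ≠ 0 := by
        intro h; rw [h, zero_mul] at hne; exact hne rfl
      have hmt : 0 ≤ (m:ℤ) + t := by
        by_contra h
        push_neg at h
        have := hv₂ t m (by positivity) h
        have hcast : (((m:ℤ)):F) = ((m:ℕ):F) := by push_cast; ring
        rw [hcast] at this
        exact h2 this
      refine ⟨((m:ℤ) + t).toNat, ?_, ?_, ?_⟩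
      · -- in range
        have hco : (Z ((Polynomial.X : Polynomial F) ^ m)).coeff (((m:ℤ) + t).toNat) ≠ 0 := by
          rw [hc₂]
          have : ((((m:ℤ) + t).toNat : ℤ)) - (m:ℤ) = t := by omega
          rw [this]
          exact h2
        have := Polynomial.le_natDegree_of_ne_zero hco
        rw [Finset.mem_range]
        omega
      · -- nonzero
        have e1 : ((((m:ℤ) + t).toNat : ℤ)) - (m:ℤ) = t := by omega
        have e2 : ((r:ℤ)) - ((((m:ℤ) + t).toNat : ℤ)) = (r:ℤ) - (m:ℤ) - t := by omega
        have e3 : (((((m:ℤ) + t).toNat) : ℕ) : F) = ((m:F) + (t:F)) := by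
          have : (((((m:ℤ) + t).toNat) : ℕ) : ℤ) = (m:ℤ) + t := by omega
          calc (((((m:ℤ) + t).toNat) : ℕ) : F) = ((((((m:ℤ) + t).toNat) : ℕ) : ℤ) : F) := by push_cast; ring
          _ = (((m:ℤ) + t : ℤ) : F) := by rw [this]
          _ = (m:F) + (t:F) := by push_cast; ring
        rw [e1, e2, e3]
        exact hne
      · omega
    · -- values agree
      intro j hj hne
      have e2 : (r:ℤ) - (m:ℤ) - ((j:ℤ) - (m:ℤ)) = (r:ℤ) - (j:ℤ) := by ring
      have e3 : ((m:F) + (((j:ℤ) - (m:ℤ) : ℤ):F)) = ((j:ℕ):F) := by push_cast; ring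
      rw [e2, e3]

variable {F} in
lemma wbanded_mul {Y Z : Module.End F (Polynomial F)} (hY : WBanded Y) (hZ : WBanded Z) :
    WBanded (Y * Z) := by
  obtain ⟨N₁, g₁, h₁⟩ := hY
  obtain ⟨N₂, g₂, h₂⟩ := hZ
  exact ⟨_, _, w_isBanded_mul h₁ h₂⟩

lemma wbanded_rho (w : WeylAlgebra F) : WBanded (Wrho F w) := by
  obtain ⟨w', rfl⟩ := RingQuot.mkAlgHom_surjective F (WeylRel F) w
  induction w' using FreeAlgebra.induction with
  | grade0 r =>
    rw [AlgHom.commutes, AlgHom.commutes, Algebra.algebraMap_eq_smul_one]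
    exact wbanded_smul F r (wbanded_one F)
  | grade1 i =>
    rw [Wrho, RingQuot.liftAlgHom_mkAlgHom_apply, FreeAlgebra.lift_ι_apply]
    fin_cases i
    · exact wbanded_D F
    · exact wbanded_X F
  | mul a b ha hb =>
    rw [map_mul, map_mul]
    exact wbanded_mul ha hb
  | add a b ha hb =>
    rw [map_add, map_add]
    exact wbanded_add F ha hb

lemma w_H_apply (v : Polynomial F) :
    (Wrho F (Wp F * Wq F)) v = Polynomial.derivative (Polynomial.X * v) := by
  rw [map_mul, Wrho_p, Wrho_q, Module.End.mul_apply, WXop, LinearMap.mulLeft_apply, WDop]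

lemma w_H_Xpow (m : ℕ) :
    (Wrho F (Wp F * Wq F)) ((Polynomial.X : Polynomial F) ^ m)
      = ((m : F) + 1) • ((Polynomial.X : Polynomial F) ^ m) := by
  rw [w_H_apply, ← pow_succ', Polynomial.derivative_X_pow, Polynomial.smul_eq_C_mul]
  push_cast
  simp

lemma w_grade_coeff_zero {i : ℤ} {a : WeylAlgebra F} (ha : a ∈ Wgrade F i)
    (m r : ℕ) (hr : (r:ℤ) ≠ (m:ℤ) + i) :
    ((Wrho F a) ((Polynomial.X : Polynomial F) ^ m)).coeff r = 0 := by
  have ha' : (Wp F * Wq F) * a - a * (Wp F * Wq F) = (i:ℤ) • a := ha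
  have heq : Wrho F (Wp F * Wq F) * Wrho F a - Wrho F a * Wrho F (Wp F * Wq F)
      = (i:ℤ) • Wrho F a := by
    rw [← map_mul (Wrho F) (Wp F * Wq F) a, ← map_mul (Wrho F) a (Wp F * Wq F), ← map_sub,
      ha', map_zsmul]
  have happ := congrArg (fun (E : Module.End F (Polynomial F)) =>
    ((E ((Polynomial.X : Polynomial F) ^ m)).coeff r)) heq
  rw [LinearMap.sub_apply, Module.End.mul_apply, Module.End.mul_apply, LinearMap.smul_apply,
    Polynomial.coeff_sub] at happ
  rw [w_H_apply, Polynomial.coeff_derivative, Polynomial.coeff_X_mul] at happ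
  rw [w_H_Xpow, map_smul, Polynomial.coeff_smul, Polynomial.coeff_smul, smul_eq_mul] at happ
  set v := Wrho F a ((Polynomial.X : Polynomial F) ^ m) with hv
  have h2 : (i:ℤ) • v.coeff r = ((i:ℤ):F) * v.coeff r := by
    rw [← Int.cast_smul_eq_zsmul F, smul_eq_mul]
  rw [h2] at happ
  have h3 : v.coeff r * ((r:F) - (m:F) - ((i:ℤ):F)) = 0 := by linear_combination happ
  have h4 : ((r:F) - (m:F) - ((i:ℤ):F)) ≠ 0 := by
    intro h
    have hc : (((r:ℤ) - (m:ℤ) - i : ℤ) : F) = ((0:ℤ) : F) := by push_cast; linear_combination h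
    have := Int.cast_injective (α := F) hc
    omega
  rcases mul_eq_zero.mp h3 with h | h
  · exact h
  · exact absurd h h4

lemma w_grade_family {i : ℤ} {a : WeylAlgebra F} (ha : a ∈ Wgrade F i) :
    ∃ P : Polynomial F, ∀ m r : ℕ,
      ((Wrho F a) ((Polynomial.X : Polynomial F) ^ m)).coeff r
        = if (r:ℤ) - (m:ℤ) = i then P.eval ((m:F)) else 0 := by
  classical
  obtain ⟨N, g, hs, hv, hc⟩ := wbanded_rho F a
  refine ⟨g i, fun m r => ?_⟩
  by_cases h : (r:ℤ) - (m:ℤ) = i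
  · rw [if_pos h, hc, h]
  · rw [if_neg h]
    exact w_grade_coeff_zero F ha m r (by omega)

variable {F} in
lemma w_coeff_mul_subtop (p q : Polynomial F) (mp nq : ℕ)
    (hp : p.natDegree ≤ mp + 1) (hq : q.natDegree ≤ nq + 1) :
    (p * q).coeff (mp + nq + 1)
      = p.coeff (mp + 1) * q.coeff nq + p.coeff mp * q.coeff (nq + 1) := by
  classical
  rw [Polynomial.coeff_mul]
  have hsub : ({(mp + 1, nq), (mp, nq + 1)} : Finset (ℕ × ℕ)) ⊆ Finset.HasAntidiagonal.antidiagonal (mp + nq + 1) := by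
    intro x hx
    simp only [Finset.mem_insert, Finset.mem_singleton] at hx
    rcases hx with rfl | rfl <;> simp [Finset.mem_antidiagonal] <;> omega
  rw [← Finset.sum_subset hsub ?_]
  · rw [Finset.sum_pair (by simp : ((mp + 1, nq) : ℕ × ℕ) ≠ (mp, nq + 1))]
  · intro x hx hnx
    simp only [Finset.HasAntidiagonal.mem_antidiagonal] at hx
    simp only [Finset.mem_insert, Finset.mem_singleton, not_or] at hnx
    rcases Nat.lt_or_ge x.1 mp with h1 | h1
    · have : nq + 1 < x.2 := by omega
      rw [Polynomial.coeff_eq_zero_of_natDegree_lt (by omega : q.natDegree < x.2), mul_zero]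
    · rcases Nat.lt_or_ge (mp + 1) x.1 with h2 | h2
      · rw [Polynomial.coeff_eq_zero_of_natDegree_lt (by omega : p.natDegree < x.1), zero_mul]
      · -- x.1 ∈ {mp, mp+1}
        exfalso
        have hx1 : x.1 = mp ∨ x.1 = mp + 1 := by omega
        rcases hx1 with h | h
        · exact hnx.2 (Prod.ext h (by omega))
        · exact hnx.1 (Prod.ext h (by omega))

variable {F} in
lemma w_taylor_coeff_of_le (f : Polynomial F) (c : F) (m : ℕ) (hf : f.natDegree ≤ m + 1) :
    ((Polynomial.taylor c) f).coeff m
      = f.coeff m + c * (((m + 1 : ℕ)) : F) * f.coeff (m + 1) := by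
  classical
  rw [Polynomial.taylor_coeff]
  have h : (Polynomial.hasseDeriv m f)
      = Polynomial.C (f.coeff m)
        + Polynomial.C ((((m + 1 : ℕ)) : F) * f.coeff (m + 1)) * Polynomial.X := by
    ext i
    rw [Polynomial.hasseDeriv_coeff]
    match i with
    | 0 =>
      simp [Nat.choose_self]
    | 1 =>
      rw [Nat.add_comm 1 m, Nat.choose_succ_self_right]
      rw [Polynomial.coeff_add, Polynomial.coeff_C, if_neg (by omega), Polynomial.coeff_C_mul,
        Polynomial.coeff_X_one]
      ring
    | (i + 2) =>
      have h0 : f.coeff (i + 2 + m) = 0 :=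
        Polynomial.coeff_eq_zero_of_natDegree_lt (by omega)
      rw [h0, Polynomial.coeff_add, Polynomial.coeff_C, if_neg (by omega),
        Polynomial.coeff_C_mul, Polynomial.coeff_X, if_neg (by omega)]
      ring
  rw [h]
  simp only [Polynomial.eval_add, Polynomial.eval_mul, Polynomial.eval_C, Polynomial.eval_X]
  ring

variable {F} in
lemma w_two_le_natDegree {g : Polynomial F} (hg : g ≠ 0)
    (h0 : g.eval 0 = 0) (h1 : g.eval 1 = 0) : 2 ≤ g.natDegree := by
  obtain ⟨g1, rfl⟩ := Polynomial.dvd_iff_isRoot.mpr h0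
  have hg1 : g1.eval 1 = 0 := by
    have := h1
    rw [Polynomial.eval_mul] at this
    simpa using this
  obtain ⟨g2, rfl⟩ := Polynomial.dvd_iff_isRoot.mpr hg1
  have hX0 : (Polynomial.X - Polynomial.C (0:F)) ≠ 0 := Polynomial.X_sub_C_ne_zero 0
  have hX1 : (Polynomial.X - Polynomial.C (1:F)) ≠ 0 := Polynomial.X_sub_C_ne_zero 1
  have hg2 : g2 ≠ 0 := by
    intro h
    rw [h, mul_zero, mul_zero] at hg
    exact hg rfl
  rw [Polynomial.natDegree_mul hX0 (mul_ne_zero hX1 hg2),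
    Polynomial.natDegree_mul hX1 hg2, Polynomial.natDegree_X_sub_C,
    Polynomial.natDegree_X_sub_C]
  omega

variable {F} in
lemma w_final_poly {f g : Polynomial F} (hf : f ≠ 0) (hg : g ≠ 0) {a b : ℤ}
    (hb : 2 ≤ b) (hab : a + b ≤ 0) (c : F)
    (hg0 : g.eval 0 = 0) (hg1 : g.eval 1 = 0)
    (hid : g * (Polynomial.taylor ((a : ℤ) : F)) f - f * (Polynomial.taylor ((b : ℤ) : F)) g
      = Polynomial.C c) :
    False := by
  classical
  have hγ : 2 ≤ g.natDegree := w_two_le_natDegree hg hg0 hg1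
  obtain ⟨γ', hγ'⟩ : ∃ γ', g.natDegree = γ' + 2 := ⟨g.natDegree - 2, by omega⟩
  have hG : g.coeff (γ' + 2) ≠ 0 := by
    rw [← hγ']
    exact Polynomial.leadingCoeff_ne_zero.mpr hg
  have hbF : ((b : ℤ) : F) ≠ 0 := Int.cast_ne_zero.mpr (by omega)
  have ha2 : a ≤ -2 := by omega
  rcases Nat.eq_zero_or_pos f.natDegree with hφ0 | hφpos
  · -- constant f
    set f0 := f.coeff 0 with hf0
    have hfC : f = Polynomial.C f0 := Polynomial.eq_C_of_natDegree_eq_zero hφ0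
    have hf0ne : f0 ≠ 0 := by
      intro h
      rw [hfC, h, map_zero] at hf
      exact hf rfl
    have hidx := congrArg (fun p => Polynomial.coeff p (γ' + 1)) hid
    rw [Polynomial.coeff_sub, Polynomial.coeff_C, if_neg (by omega)] at hidx
    rw [hfC, Polynomial.taylor_C] at hidx
    rw [Polynomial.coeff_mul_C, Polynomial.coeff_C_mul] at hidx
    rw [w_taylor_coeff_of_le g ((b:ℤ):F) (γ' + 1) (by omega)] at hidx
    have : f0 * (((b:ℤ):F) * (((γ' + 2 : ℕ)):F) * g.coeff (γ' + 2)) = 0 := by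
      linear_combination -hidx
    have hne : f0 * (((b:ℤ):F) * (((γ' + 2 : ℕ)):F) * g.coeff (γ' + 2)) ≠ 0 := by
      apply mul_ne_zero hf0ne
      apply mul_ne_zero (mul_ne_zero hbF (Nat.cast_ne_zero.mpr (by omega)))
      exact hG
    exact hne this
  · obtain ⟨φ', hφ'⟩ : ∃ φ', f.natDegree = φ' + 1 := ⟨f.natDegree - 1, by omega⟩
    have hFl : f.coeff (φ' + 1) ≠ 0 := by
      rw [← hφ']
      exact Polynomial.leadingCoeff_ne_zero.mpr hf
    have hidx := congrArg (fun p => Polynomial.coeff p ((γ' + 1) + φ' + 1)) hid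
    rw [Polynomial.coeff_sub, Polynomial.coeff_C, if_neg (by omega)] at hidx
    rw [w_coeff_mul_subtop g ((Polynomial.taylor ((a:ℤ):F)) f) (γ' + 1) φ'
      (by omega) (by rw [Polynomial.natDegree_taylor]; omega)] at hidx
    have hBidx : (f * (Polynomial.taylor ((b:ℤ):F)) g).coeff ((γ' + 1) + φ' + 1)
        = f.coeff (φ' + 1) * ((Polynomial.taylor ((b:ℤ):F)) g).coeff (γ' + 1)
          + f.coeff φ' * ((Polynomial.taylor ((b:ℤ):F)) g).coeff (γ' + 2) := by
      have := w_coeff_mul_subtop f ((Polynomial.taylor ((b:ℤ):F)) g) φ' (γ' + 1)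
        (by omega) (by rw [Polynomial.natDegree_taylor]; omega)
      rw [show φ' + (γ' + 1) + 1 = (γ' + 1) + φ' + 1 by omega] at this
      exact this
    rw [hBidx] at hidx
    rw [w_taylor_coeff_of_le f ((a:ℤ):F) φ' (by omega),
      w_taylor_coeff_of_le f ((a:ℤ):F) (φ' + 1) (by omega),
      w_taylor_coeff_of_le g ((b:ℤ):F) (γ' + 1) (by omega),
      w_taylor_coeff_of_le g ((b:ℤ):F) (γ' + 2) (by omega)] at hidx
    rw [Polynomial.coeff_eq_zero_of_natDegree_lt (by omega : f.natDegree < φ' + 1 + 1),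
      Polynomial.coeff_eq_zero_of_natDegree_lt (by omega : g.natDegree < γ' + 2 + 1)] at hidx
    -- hidx now reduces to (aφ - bγ) F G = 0
    have hkey : (((a:ℤ):F) * (((φ' + 1 : ℕ)):F) - ((b:ℤ):F) * (((γ' + 2 : ℕ)):F))
        * (f.coeff (φ' + 1) * g.coeff (γ' + 2)) = 0 := by
      ring_nf
      ring_nf at hidx
      linear_combination hidx
    have h5 := mul_eq_zero.mp hkey
    rcases h5 with h5 | h5
    · have hcast : ((a * (φ' + 1 : ℤ) - b * (γ' + 2 : ℤ) : ℤ) : F) = ((0:ℤ):F) := by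
        push_cast
        push_cast at h5
        linear_combination h5
      have := Int.cast_injective (α := F) hcast
      have hneg : a * (φ' + 1 : ℤ) < 0 :=
        mul_neg_of_neg_of_pos (by omega) (by positivity)
      have hpos : (0:ℤ) < b * (γ' + 2 : ℤ) := by positivity
      omega
    · rcases mul_eq_zero.mp h5 with h | h
      · exact hFl h
      · exact hG h

/-- Lemma 4.1. -/
theorem unsolvable_of_components_ge_two (k n : ℤ) (hk : 1 < k)
    (xc : ℤ → WeylAlgebra F) (hmem : ∀ i : ℤ, xc i ∈ Wgrade F i)
    (x : WeylAlgebra F) (hx : x = ∑ i ∈ Finset.Icc k n, xc i) :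
    ¬ Solvable F x := by
  classical
  rintro ⟨y, hy⟩
  choose P hP using fun i : ℤ => w_grade_family F (hmem i)
  set NT := n.toNat with hNT
  set fT : ℤ → Polynomial F := fun t => if t ∈ Finset.Icc k n then P t else 0 with hfT
  have hTsupp2 : ∀ t, fT t ≠ 0 → t ∈ Finset.Icc k n := by
    intro t ht
    by_cases h : t ∈ Finset.Icc k n
    · exact h
    · exfalso; apply ht; rw [hfT]; simp [h]
  have hTcoeff : ∀ m r : ℕ, ((Wrho F x) ((Polynomial.X : Polynomial F) ^ m)).coeff r
      = (fT ((r:ℤ) - (m:ℤ))).eval ((m:F)) := by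
    intro m r
    rw [hx, map_sum, LinearMap.sum_apply, Polynomial.finset_sum_coeff]
    rw [Finset.sum_congr rfl (fun i _ => hP i m r)]
    rw [Finset.sum_ite_eq]
    by_cases h : ((r:ℤ) - (m:ℤ)) ∈ Finset.Icc k n
    · rw [if_pos h, hfT]; dsimp only; rw [if_pos h]
    · rw [if_neg h, hfT]; dsimp only; rw [if_neg h, Polynomial.eval_zero]
  have hTb : WIsBanded (Wrho F x) NT fT := by
    refine ⟨?_, ?_, hTcoeff⟩
    · intro t ht
      have h2 := Finset.mem_Icc.mp (hTsupp2 t ht)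
      rw [Finset.mem_Icc, hNT]
      omega
    · intro t z hz hzt
      by_cases h : t ∈ Finset.Icc k n
      · exfalso
        have := Finset.mem_Icc.mp h
        omega
      · rw [hfT]; dsimp only; rw [if_neg h, Polynomial.eval_zero]
  obtain ⟨Ny, gy, hgys, hgyv, hgyc⟩ := wbanded_rho F y
  have hYb : WIsBanded (Wrho F y) Ny gy := ⟨hgys, hgyv, hgyc⟩
  have hEnd : Wrho F x * Wrho F y - Wrho F y * Wrho F x = 1 := by
    rw [← map_mul, ← map_mul, ← map_sub, hy, map_one]
  set gTY : ℤ → Polynomial F := fun u => ∑ t ∈ Finset.Icc (-(Ny:ℤ)) (Ny:ℤ),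
      gy t * (Polynomial.taylor ((t : ℤ) : F)) (fT (u - t)) with hgTY
  set gYT : ℤ → Polynomial F := fun u => ∑ t ∈ Finset.Icc (-(NT:ℤ)) (NT:ℤ),
      fT t * (Polynomial.taylor ((t : ℤ) : F)) (gy (u - t)) with hgYT
  have hTY : WIsBanded (Wrho F x * Wrho F y) (NT + Ny) gTY := w_isBanded_mul hTb hYb
  have hYT : WIsBanded (Wrho F y * Wrho F x) (Ny + NT) gYT := w_isBanded_mul hYb hTb
  have key : ∀ u : ℤ, gTY u - gYT u = Polynomial.C (if u = 0 then (1:F) else 0) := by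
    intro u
    have hroot : ∀ m : ℕ, ((-u).toNat ≤ m) →
        (gTY u - gYT u - Polynomial.C (if u = 0 then (1:F) else 0)).eval ((m:F)) = 0 := by
      intro m hm
      set r := ((m:ℤ) + u).toNat with hr
      have hru : (r:ℤ) = (m:ℤ) + u := by omega
      have happ := congrArg (fun (E : Module.End F (Polynomial F)) =>
        ((E ((Polynomial.X : Polynomial F) ^ m)).coeff r)) hEnd
      rw [LinearMap.sub_apply, Polynomial.coeff_sub, Module.End.one_apply] at happ
      rw [hTY.2.2 m r, hYT.2.2 m r, Polynomial.coeff_X_pow] at happ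
      have hrm : ((r:ℤ) - (m:ℤ)) = u := by omega
      rw [hrm] at happ
      rw [Polynomial.eval_sub, Polynomial.eval_sub, Polynomial.eval_C, happ]
      by_cases hu : u = 0
      · have : r = m := by omega
        simp [this, hu]
      · have : ¬ (r = m) := by omega
        simp [this, hu]
    have hzero : gTY u - gYT u - Polynomial.C (if u = 0 then (1:F) else 0) = 0 := by
      apply Polynomial.eq_zero_of_infinite_isRoot
      apply Set.infinite_of_injective_forall_mem
        (f := fun j : ℕ => ((j + (-u).toNat : ℕ) : F))
      · intro j j' h
        have : ((j + (-u).toNat : ℕ) : F) = ((j' + (-u).toNat : ℕ) : F) := h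
        have := Nat.cast_injective (R := F) this
        omega
      · intro j
        exact hroot (j + (-u).toNat) (by omega)
    linear_combination hzero
  have contra0 : gTY 0 - gYT 0 ≠ 0 := by
    rw [key 0, if_pos rfl]
    intro h
    have := congrArg (fun p => Polynomial.coeff p 0) h
    simp at this
  set suppT := (Finset.Icc (-(NT:ℤ)) (NT:ℤ)).filter (fun t => fT t ≠ 0) with hsT
  set suppY := (Finset.Icc (-(Ny:ℤ)) (Ny:ℤ)).filter (fun t => gy t ≠ 0) with hsY
  have hTall : ∀ t, fT t ≠ 0 → t ∈ suppT := fun t ht =>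
    Finset.mem_filter.mpr ⟨hTb.1 t ht, ht⟩
  have hYall : ∀ t, gy t ≠ 0 → t ∈ suppY := fun t ht =>
    Finset.mem_filter.mpr ⟨hgys t ht, ht⟩
  rcases Finset.eq_empty_or_nonempty suppT with hTe | hTne
  · have hT0 : ∀ t, fT t = 0 := by
      intro t
      by_contra h
      have := hTall t h
      rw [hTe] at this
      exact absurd this (Finset.notMem_empty t)
    apply contra0
    have h1 : gTY 0 = 0 := Finset.sum_eq_zero (fun t _ => by rw [hT0, map_zero, mul_zero])
    have h2 : gYT 0 = 0 := Finset.sum_eq_zero (fun t _ => by rw [hT0, zero_mul])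
    rw [h1, h2, sub_zero]
  rcases Finset.eq_empty_or_nonempty suppY with hYe | hYne
  · have hY0 : ∀ t, gy t = 0 := by
      intro t
      by_contra h
      have := hYall t h
      rw [hYe] at this
      exact absurd this (Finset.notMem_empty t)
    apply contra0
    have h1 : gTY 0 = 0 := Finset.sum_eq_zero (fun t _ => by rw [hY0, zero_mul])
    have h2 : gYT 0 = 0 := Finset.sum_eq_zero (fun t _ => by rw [hY0, map_zero, mul_zero])
    rw [h1, h2, sub_zero]
  set k' := suppT.min' hTne with hk'
  set a := suppY.min' hYne with ha
  have hk'mem := Finset.mem_filter.mp (suppT.min'_mem hTne)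
  have hamem := Finset.mem_filter.mp (suppY.min'_mem hYne)
  have hk'2 : 2 ≤ k' := by
    have := Finset.mem_Icc.mp (hTsupp2 k' hk'mem.2)
    omega
  have hu0 : k' + a ≤ 0 := by
    by_contra hpos
    push_neg at hpos
    apply contra0
    have h1 : gTY 0 = 0 := by
      apply Finset.sum_eq_zero
      intro t _
      by_cases hgyt : gy t = 0
      · rw [hgyt, zero_mul]
      · have hat : a ≤ t := Finset.min'_le _ _ (hYall t hgyt)
        have hfT0 : fT (0 - t) = 0 := by
          by_contra h
          have := Finset.min'_le _ _ (hTall _ h)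
          omega
        rw [hfT0, map_zero, mul_zero]
    have h2 : gYT 0 = 0 := by
      apply Finset.sum_eq_zero
      intro t _
      by_cases hfTt : fT t = 0
      · rw [hfTt, zero_mul]
      · have hat : k' ≤ t := Finset.min'_le _ _ (hTall t hfTt)
        have hgy0 : gy (0 - t) = 0 := by
          by_contra h
          have := Finset.min'_le _ _ (hYall _ h)
          omega
        rw [hgy0, map_zero, mul_zero]
    rw [h1, h2, sub_zero]
  have hgTYu : gTY (k' + a) = gy a * (Polynomial.taylor ((a : ℤ) : F)) (fT k') := by
    rw [hgTY]
    dsimp only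
    rw [Finset.sum_eq_single_of_mem a (Finset.mem_filter.mp (suppY.min'_mem hYne)).1]
    · rw [show k' + a - a = k' by ring]
    · intro t ht hta
      by_cases hgyt : gy t = 0
      · rw [hgyt, zero_mul]
      · have hat : a ≤ t := Finset.min'_le _ _ (hYall t hgyt)
        have hfT0 : fT (k' + a - t) = 0 := by
          by_contra h
          have := Finset.min'_le _ _ (hTall _ h)
          omega
        rw [hfT0, map_zero, mul_zero]
  have hgYTu : gYT (k' + a) = fT k' * (Polynomial.taylor ((k' : ℤ) : F)) (gy a) := by
    rw [hgYT]
    dsimp only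
    rw [Finset.sum_eq_single_of_mem k' (Finset.mem_filter.mp (suppT.min'_mem hTne)).1]
    · rw [show k' + a - k' = a by ring]
    · intro t ht htk
      by_cases hfTt : fT t = 0
      · rw [hfTt, zero_mul]
      · have hat : k' ≤ t := Finset.min'_le _ _ (hTall t hfTt)
        have hgy0 : gy (k' + a - t) = 0 := by
          by_contra h
          have := Finset.min'_le _ _ (hYall _ h)
          omega
        rw [hgy0, map_zero, mul_zero]
  have hident := key (k' + a)
  rw [hgTYu, hgYTu] at hident
  have hg0 : (gy a).eval (0:F) = 0 := by
    have := hgyv a 0 (le_refl 0) (by omega)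
    simpa using this
  have hg1 : (gy a).eval (1:F) = 0 := by
    have := hgyv a 1 (by norm_num) (by omega)
    simpa using this
  exact w_final_poly hk'mem.2 hamem.2 hk'2 (by omega : a + k' ≤ 0) _ hg0 hg1 hident
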